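/- For all i, j and integers α ≥ 0, t ≥ 0, the operator identity Σ_{s≥0} ∂^t( f · p_{i,α,t}(g) ) = Σ_{t≥0} ∂^t(f) · ∂_{i,α+t}(g) holds for all f, g ∈ 𝒜; equivalently, Σ_{t≥0} C(t+s,s) ∂^t ∘ p_{i,α,s+t} = ∂_{i,α+s} as operators on 𝒜. -/

import Mathlib

open MvPolynomial

/-- The differential polynomial algebra `𝒜` in the variables `u^{i,s}`,
`1 ≤ i ≤ n`, `s ≥ 0`. -/
abbrev DP (n : ℕ) : Type := MvPolynomial (Fin n × ℕ) ℝ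

/-- The total derivative `∂ = Σ u^{i,s+1} ∂_{i,s}` (on each differential
polynomial only finitely many terms act nontrivially). -/
noncomputable def totalDer {n : ℕ} (f : DP n) : DP n :=
  ∑ v ∈ f.vars, X (v.1, v.2 + 1) * pderiv v f

/-- A bound such that `∂_{i,k} f = 0` for all `k ≥ vbound f`. -/
noncomputable def vbound {n : ℕ} (f : DP n) : ℕ := (f.vars.sup (fun v => v.2)) + 1

/-- The higher generalized momentum operator
`p_{i,α,s} = Σ_{t≥0} (-1)^t C(t+s,s) ∂^t ∘ ∂_{i,α+s+t}`; the sum is finite on each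
differential polynomial, and is truncated at a sufficiently large bound. -/
noncomputable def pmom {n : ℕ} (i : Fin n) (α s : ℕ) (f : DP n) : DP n :=
  ∑ t ∈ Finset.range (vbound f),
    ((-1 : ℝ) ^ t * (Nat.choose (t + s) s : ℝ)) • totalDer^[t] (pderiv (i, α + s + t) f)

/-- The higher energy operator `E_s = Σ_{α≥1} u^{i,α} p_{i,α,s}`. -/
noncomputable def Eop {n : ℕ} (s : ℕ) (f : DP n) : DP n :=
  ∑ i : Fin n, ∑ α ∈ Finset.Icc 1 (vbound f), X (i, α) * pmom i α s f

/-- The energy operator `E = E₀ - 1`. -/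
noncomputable def Ener {n : ℕ} (f : DP n) : DP n := Eop 0 f - f

noncomputable def Der (n : ℕ) : Derivation ℝ (DP n) (DP n) :=
  mkDerivation ℝ (fun v => X (v.1, v.2 + 1))

lemma Der_X {n : ℕ} (v : Fin n × ℕ) : Der n (X v) = X (v.1, v.2 + 1) :=
  mkDerivation_X _ _ _

lemma totalDer_sub {n : ℕ} (f : DP n) {T : Finset (Fin n × ℕ)} (hT : f.vars ⊆ T) :
    totalDer f = ∑ v ∈ T, X (v.1, v.2 + 1) * pderiv v f := by
  rw [totalDer]
  exact Finset.sum_subset hT (fun v _ hv => by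
    rw [pderiv_eq_zero_of_notMem_vars hv, mul_zero])

lemma totalDer_eq {n : ℕ} (f : DP n) : totalDer f = Der n f := by
  induction f using MvPolynomial.induction_on with
  | C r => simp [totalDer, vars_C]
  | add p q hp hq =>
      rw [totalDer_sub (p+q) (vars_add_subset p q), map_add, ← hp, ← hq,
        totalDer_sub p Finset.subset_union_left,
        totalDer_sub q Finset.subset_union_right, ← Finset.sum_add_distrib]
      exact Finset.sum_congr rfl fun v _ => by rw [map_add, mul_add]
  | mul_X p v hp =>
      have hT : (p * X v).vars ⊆ p.vars ∪ {v} := by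
        refine (vars_mul _ _).trans ?_
        rw [vars_X]
      rw [totalDer_sub _ hT]
      have hsplit : ∀ w ∈ p.vars ∪ {v}, X (w.1, w.2+1) * pderiv w (p * X v)
          = X (w.1, w.2+1) * pderiv w p * X v
            + X (w.1, w.2+1) * (p * pderiv w (X v)) := by
        intro w _; rw [pderiv_mul]; ring
      rw [Finset.sum_congr rfl hsplit, Finset.sum_add_distrib, ← Finset.sum_mul]
      have h2 : ∑ w ∈ p.vars ∪ {v}, X (w.1, w.2+1) * (p * pderiv w (X v))
          = X (v.1, v.2+1) * p := by
        rw [Finset.sum_eq_single_of_mem v (by simp)]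
        · rw [pderiv_X_self, mul_one]
        · intro w _ hw
          rw [pderiv_X_of_ne hw.symm, mul_zero, mul_zero]
      rw [h2]
      have h1 : ∑ w ∈ p.vars ∪ {v}, X (w.1, w.2+1) * pderiv w p = totalDer p :=
        (totalDer_sub p Finset.subset_union_left).symm
      rw [h1, hp, Derivation.leibniz, smul_eq_mul, smul_eq_mul, Der_X]
      ring


noncomputable def Lp (n : ℕ) (t : ℕ) : DP n →ₗ[ℝ] DP n := (Der n).toLinearMap ^ t

lemma Lp_zero {n : ℕ} (f : DP n) : Lp n 0 f = f := by simp [Lp]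

lemma Lp_succ {n : ℕ} (t : ℕ) (f : DP n) : Lp n (t+1) f = Der n (Lp n t f) := by
  rw [Lp, pow_succ', Module.End.mul_apply]; rfl

lemma Lp_add {n : ℕ} (t r : ℕ) (f : DP n) : Lp n (t+r) f = Lp n t (Lp n r f) := by
  rw [Lp, pow_add, Module.End.mul_apply]; rfl

lemma iterL {n : ℕ} (t : ℕ) (f : DP n) : totalDer^[t] f = Lp n t f := by
  induction t with
  | zero => simp [Lp]
  | succ t ih => rw [Function.iterate_succ_apply', ih, totalDer_eq, Lp_succ]

lemma pd0 {n : ℕ} (g : DP n) {m : ℕ} (h : vbound g ≤ m) (j : Fin n) :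
    pderiv (j, m) g = 0 := by
  refine pderiv_eq_zero_of_notMem_vars fun hmem => ?_
  have := Finset.le_sup (f := fun v : Fin n × ℕ => v.2) hmem
  simp only [vbound] at h
  dsimp only at this
  omega

lemma pmom_eq {n : ℕ} (i : Fin n) (α s : ℕ) (g : DP n) :
    pmom i α s g = ∑ r ∈ Finset.range (vbound g),
      ((-1 : ℝ) ^ r * (Nat.choose (r + s) s : ℝ)) • Lp n r (pderiv (i, α + s + r) g) :=
  Finset.sum_congr rfl fun r _ => by rw [iterL]

lemma conv {M : Type*} [AddCommMonoid M] [Module ℝ M] (c : ℕ → ℕ → ℝ) (G : ℕ → M)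
    {B B1 B2 : ℕ} (h1 : B ≤ B1) (h2 : B ≤ B2) (hG : ∀ m, B ≤ m → G m = 0) :
    ∑ t ∈ Finset.range B1, ∑ r ∈ Finset.range B2, c t r • G (t + r) =
    ∑ m ∈ Finset.range B, (∑ p ∈ Finset.HasAntidiagonal.antidiagonal m, c p.1 p.2) • G m := by
  classical
  rw [← Finset.sum_product']
  have hset : (Finset.range B1 ×ˢ Finset.range B2)
      = ((Finset.range B1 ×ˢ Finset.range B2).filter (fun p => p.1 + p.2 < B)) ∪
        ((Finset.range B1 ×ˢ Finset.range B2).filter (fun p => ¬ p.1 + p.2 < B)) :=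
    (Finset.filter_union_filter_not_eq _ _).symm
  rw [hset, Finset.sum_union (Finset.disjoint_filter_filter_not _ _ _)]
  have hz : ∑ p ∈ (Finset.range B1 ×ˢ Finset.range B2).filter (fun p => ¬ p.1 + p.2 < B),
      c p.1 p.2 • G (p.1 + p.2) = 0 := by
    refine Finset.sum_eq_zero fun p hp => ?_
    rw [Finset.mem_filter] at hp
    rw [hG _ (by omega), smul_zero]
  rw [hz, add_zero]
  have hfil : (Finset.range B1 ×ˢ Finset.range B2).filter (fun p => p.1 + p.2 < B)
      = (Finset.range B).biUnion Finset.HasAntidiagonal.antidiagonal := by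
    ext p
    simp only [Finset.mem_filter, Finset.mem_product, Finset.mem_range, Finset.mem_biUnion]
    constructor
    · rintro ⟨⟨hp1, hp2⟩, h⟩
      exact ⟨p.1 + p.2, h, Finset.HasAntidiagonal.mem_antidiagonal.2 rfl⟩
    · rintro ⟨m, hm, hp⟩
      rw [Finset.HasAntidiagonal.mem_antidiagonal] at hp
      omega
  rw [hfil, Finset.sum_biUnion]
  · refine Finset.sum_congr rfl fun m hm => ?_
    rw [Finset.sum_smul]
    refine Finset.sum_congr rfl fun p hp => ?_
    rw [Finset.HasAntidiagonal.mem_antidiagonal] at hp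
    rw [hp]
  · intro x hx y hy hxy
    refine Finset.disjoint_left.2 fun p hp hp' => hxy ?_
    rw [Finset.HasAntidiagonal.mem_antidiagonal] at hp
    rw [Finset.HasAntidiagonal.mem_antidiagonal] at hp'
    omega

lemma coeffId (a m : ℕ) :
    (∑ p ∈ Finset.HasAntidiagonal.antidiagonal m,
      (((a + p.1).choose a : ℝ)) * ((-1 : ℝ)^p.2 * ((a + m).choose (a + p.1) : ℝ))) =
    if m = 0 then 1 else 0 := by
  rw [Finset.Nat.sum_antidiagonal_eq_sum_range_succ_mk]
  have key : ∀ k ∈ Finset.range (m+1),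
      (((a + k).choose a : ℝ)) * ((-1 : ℝ)^(m - k) * ((a + m).choose (a + k) : ℝ))
      = ((a+m).choose a : ℝ) * (-1 : ℝ)^m * ((-1:ℝ)^k * (m.choose k : ℝ)) := by
    intro k hk
    rw [Finset.mem_range] at hk
    have hch : (a+m).choose (a+k) * (a+k).choose a = (a+m).choose a * m.choose k := by
      have := Nat.choose_mul (n := a+m) (k := a+k) (s := a) (by omega)
      simpa using this
    have hsgn : ((-1 : ℝ))^(m-k) = (-1)^m * (-1)^k := by
      have h1 : ((-1 : ℝ))^(m-k) * (-1)^k = (-1)^m := by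
        rw [← pow_add]; congr 1; omega
      have h2 : ((-1 : ℝ))^k * (-1)^k = 1 := by
        rw [← pow_add, ← two_mul, pow_mul]; norm_num
      calc ((-1 : ℝ))^(m-k) = (-1:ℝ)^(m-k) * ((-1)^k * (-1)^k) := by rw [h2, mul_one]
        _ = (-1)^m * (-1)^k := by rw [← mul_assoc, h1]
    rw [hsgn]
    have : (((a + m).choose (a + k) : ℝ)) * ((a + k).choose a : ℝ)
        = ((a+m).choose a : ℝ) * (m.choose k : ℝ) := by exact_mod_cast congrArg Nat.cast hch
    linear_combination ((-1:ℝ)^m * (-1)^k) * this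
  rw [Finset.sum_congr rfl key, ← Finset.mul_sum]
  have halt : (∑ k ∈ Finset.range (m+1), ((-1:ℝ))^k * (m.choose k : ℝ))
      = if m = 0 then 1 else 0 := by
    have h := Int.alternating_sum_range_choose (n := m)
    by_cases hm : m = 0
    · subst hm; simp
    · rw [if_neg hm] at h ⊢
      exact_mod_cast h
  rw [halt]
  by_cases hm : m = 0
  · subst hm; simp
  · simp [hm]
lemma Lp_mul {n : ℕ} (t : ℕ) (p q : DP n) :
    Lp n t (p * q) =
      ∑ k ∈ Finset.range (t+1), t.choose k • (Lp n k p * Lp n (t-k) q) := by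
  induction t generalizing p q with
  | zero => simp [Lp]
  | succ t ih =>
    rw [Lp_succ, ih, map_sum]
    have step : ∀ k ∈ Finset.range (t+1),
        Der n (t.choose k • (Lp n k p * Lp n (t-k) q)) =
          t.choose k • (Lp n (k+1) p * Lp n (t-k) q)
          + t.choose k • (Lp n k p * Lp n (t+1-k) q) := by
      intro k hk
      rw [map_nsmul, Derivation.leibniz, smul_eq_mul, smul_eq_mul, ← Lp_succ, ← Lp_succ,
        smul_add]
      rw [Finset.mem_range] at hk
      have h1 : t + 1 - k = (t - k) + 1 := by omega
      rw [h1]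
      ring_nf
    rw [Finset.sum_congr rfl step, Finset.sum_add_distrib]
    have hB : ∑ k ∈ Finset.range (t+1), t.choose k • (Lp n k p * Lp n (t+1-k) q)
        = (∑ k ∈ Finset.range (t+1),
            t.choose (k+1) • (Lp n (k+1) p * Lp n (t-k) q)) + p * Lp n (t+1) q := by
      rw [Finset.sum_range_succ' (fun k => t.choose k • (Lp n k p * Lp n (t+1-k) q)) t]
      congr 1
      · rw [Finset.sum_range_succ, Nat.choose_succ_self, zero_smul, add_zero]
        refine Finset.sum_congr rfl fun k hk => ?_
        rw [Finset.mem_range] at hk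
        have : t + 1 - (k+1) = t - k := by omega
        rw [this]
      · have hL0 : Lp n 0 p = p := by simp [Lp]
        rw [Nat.choose_zero_right, one_smul, hL0, Nat.sub_zero]
    rw [hB, ← add_assoc, ← Finset.sum_add_distrib]
    have hC : ∀ k ∈ Finset.range (t+1),
        t.choose k • (Lp n (k+1) p * Lp n (t-k) q)
          + t.choose (k+1) • (Lp n (k+1) p * Lp n (t-k) q)
        = (t+1).choose (k+1) • (Lp n (k+1) p * Lp n (t+1-(k+1)) q) := by
      intro k hk
      rw [Finset.mem_range] at hk
      have h2 : t + 1 - (k+1) = t - k := by omega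
      rw [h2, ← add_smul, ← Nat.choose_succ_succ]
    rw [Finset.sum_congr rfl hC]
    rw [Finset.sum_range_succ' (fun k => (t+1).choose k • (Lp n k p * Lp n (t+1-k) q)) (t+1)]
    have hL0 : Lp n 0 p = p := by simp [Lp]
    rw [Nat.choose_zero_right, one_smul, hL0, Nat.sub_zero]


lemma claim2 {n : ℕ} (i : Fin n) (α s : ℕ) (g : DP n) :
    (∑ t ∈ Finset.range (vbound g),
        (Nat.choose (t + s) s : ℝ) • totalDer^[t] (pmom i α (s + t) g)) =
      pderiv (i, α + s) g := by
  set B := vbound g with hB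
  have hB0 : 0 < B := Nat.succ_pos _
  set G : ℕ → DP n := fun m => Lp n m (pderiv (i, α + s + m) g) with hGdef
  have hG : ∀ m, B ≤ m → G m = 0 := by
    intro m hm
    rw [hGdef]
    dsimp only
    rw [pd0 g (by omega) i, map_zero]
  have expand : ∀ t ∈ Finset.range B,
      (Nat.choose (t + s) s : ℝ) • totalDer^[t] (pmom i α (s + t) g)
        = ∑ r ∈ Finset.range B,
            (((t + s).choose s : ℝ) * ((-1 : ℝ)^r * ((r + (s + t)).choose (s + t) : ℝ)))
              • G (t + r) := by
    intro t ht
    rw [iterL, pmom_eq, map_sum, Finset.smul_sum]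
    refine Finset.sum_congr rfl fun r hr => ?_
    rw [map_smul, ← Lp_add, smul_smul, hGdef]
    dsimp only
    have : α + (s + t) + r = α + s + (t + r) := by omega
    rw [this]
  rw [Finset.sum_congr rfl expand]
  rw [conv _ _ (le_refl B) (le_refl B) hG]
  have coeff : ∀ m ∈ Finset.range B,
      (∑ p ∈ Finset.HasAntidiagonal.antidiagonal m,
        (((p.1 + s).choose s : ℝ) * ((-1 : ℝ)^p.2 * ((p.2 + (s + p.1)).choose (s + p.1) : ℝ))))
        • G m = (if m = 0 then (1:ℝ) else 0) • G m := by
    intro m hm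
    congr 1
    rw [← coeffId s m]
    refine Finset.sum_congr rfl fun p hp => ?_
    rw [Finset.HasAntidiagonal.mem_antidiagonal] at hp
    have e1 : p.1 + s = s + p.1 := by omega
    have e2 : p.2 + (s + p.1) = s + m := by omega
    rw [e1, e2]
  rw [Finset.sum_congr rfl coeff, Finset.sum_eq_single 0]
  · rw [if_pos rfl, one_smul, hGdef]
    dsimp only
    rw [Lp_zero, Nat.add_zero]
  · intro m _ hm0
    rw [if_neg hm0, zero_smul]
  · intro h
    exact absurd (Finset.mem_range.2 hB0) h

lemma claim1 {n : ℕ} (i : Fin n) (α : ℕ) (f g : DP n) :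
    (∑ t ∈ Finset.range (vbound g), totalDer^[t] (f * pmom i α t g)) =
    (∑ t ∈ Finset.range (vbound g), totalDer^[t] f * pderiv (i, α + t) g) := by
  set B := vbound g with hB
  have hB0 : 0 < B := Nat.succ_pos _
  set F : ℕ → ℕ → DP n := fun t k =>
    ∑ r ∈ Finset.range B,
      ((t.choose k : ℝ) * ((-1 : ℝ)^r * ((r + t).choose t : ℝ)))
        • (Lp n k f * Lp n ((t - k) + r) (pderiv (i, α + t + r) g)) with hF
  have expand : ∀ t ∈ Finset.range B,
      totalDer^[t] (f * pmom i α t g) = ∑ k ∈ Finset.range (t+1), F t k := by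
    intro t ht
    rw [iterL, Lp_mul]
    refine Finset.sum_congr rfl fun k hk => ?_
    have hin : Lp n (t - k) (pmom i α t g)
        = ∑ r ∈ Finset.range B,
            ((-1 : ℝ)^r * ((r + t).choose t : ℝ))
              • Lp n ((t - k) + r) (pderiv (i, α + t + r) g) := by
      rw [pmom_eq, map_sum]
      exact Finset.sum_congr rfl fun r hr => by rw [map_smul, ← Lp_add]
    rw [hin, Finset.mul_sum, Finset.smul_sum, hF]
    refine Finset.sum_congr rfl fun r hr => ?_
    rw [mul_smul_comm, ← Nat.cast_smul_eq_nsmul ℝ, smul_smul]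
  rw [Finset.sum_congr rfl expand]
  simp only [Finset.range_eq_Ico]
  have swap : (∑ t ∈ Finset.Ico 0 B, ∑ k ∈ Finset.Ico 0 (t+1), F t k)
      = ∑ k ∈ Finset.Ico 0 B, ∑ t ∈ Finset.Ico k B, F t k :=
    (Finset.sum_Ico_Ico_comm 0 B (fun k t => F t k)).symm
  rw [swap]
  have inner : ∀ a ∈ Finset.Ico 0 B,
      (∑ t ∈ Finset.Ico a B, F t a) = Lp n a f * pderiv (i, α + a) g := by
    intro a ha
    rw [Finset.mem_Ico] at ha
    rw [Finset.sum_Ico_eq_sum_range]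
    set G : ℕ → DP n := fun m => Lp n m (pderiv (i, α + a + m) g) with hGdef
    have hG : ∀ m, B - a ≤ m → G m = 0 := by
      intro m hm
      rw [hGdef]; dsimp only
      rw [pd0 g (by omega) i, map_zero]
    have e1 : ∀ t' ∈ Finset.range (B - a), F (a + t') a
        = ∑ r ∈ Finset.range B,
            (((a + t').choose a : ℝ) * ((-1 : ℝ)^r * ((r + (a + t')).choose (a + t') : ℝ)))
              • (Lp n a f * G (t' + r)) := by
      intro t' ht'
      rw [hF]
      refine Finset.sum_congr rfl fun r hr => ?_
      rw [hGdef]; dsimp only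
      have e2 : a + t' - a = t' := by omega
      have e3 : α + (a + t') + r = α + a + (t' + r) := by omega
      rw [e2, e3]
    rw [Finset.sum_congr rfl e1]
    have pull : ∀ t' ∈ Finset.range (B - a), (∑ r ∈ Finset.range B,
        (((a + t').choose a : ℝ) * ((-1 : ℝ)^r * ((r + (a + t')).choose (a + t') : ℝ)))
          • (Lp n a f * G (t' + r)))
        = Lp n a f * ∑ r ∈ Finset.range B,
            (((a + t').choose a : ℝ) * ((-1 : ℝ)^r * ((r + (a + t')).choose (a + t') : ℝ)))
              • G (t' + r) := by
      intro t' ht'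
      rw [Finset.mul_sum]
      exact Finset.sum_congr rfl fun r hr => by rw [mul_smul_comm]
    rw [Finset.sum_congr rfl pull, ← Finset.mul_sum]
    rw [conv (fun t' r => (((a + t').choose a : ℝ)
        * ((-1 : ℝ)^r * ((r + (a + t')).choose (a + t') : ℝ)))) G
      (le_refl (B - a)) (by omega) hG]
    have coeff : ∀ m ∈ Finset.range (B - a),
        (∑ p ∈ Finset.HasAntidiagonal.antidiagonal m,
          (((a + p.1).choose a : ℝ) * ((-1 : ℝ)^p.2 * ((p.2 + (a + p.1)).choose (a + p.1) : ℝ))))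
          • G m = (if m = 0 then (1:ℝ) else 0) • G m := by
      intro m hm
      congr 1
      rw [← coeffId a m]
      refine Finset.sum_congr rfl fun p hp => ?_
      rw [Finset.HasAntidiagonal.mem_antidiagonal] at hp
      have e2 : p.2 + (a + p.1) = a + m := by omega
      rw [e2]
    rw [Finset.sum_congr rfl coeff, Finset.sum_eq_single 0]
    · rw [if_pos rfl, one_smul, hGdef]
      dsimp only
      rw [Lp_zero, Nat.add_zero]
    · intro m _ hm0
      rw [if_neg hm0, zero_smul]
    · intro h
      exact absurd (Finset.mem_range.2 (by omega)) h
  rw [Finset.sum_congr rfl inner]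
  exact Finset.sum_congr rfl fun t _ => by rw [iterL]


/-- `Σ_t ∂^t(f · p_{i,α,t}(g)) = Σ_t ∂^t(f)·∂_{i,α+t}(g)`; equivalently
`Σ_t C(t+s,s) ∂^t ∘ p_{i,α,s+t} = ∂_{i,α+s}` (all sums finite and truncated at a
sufficiently large bound). -/
theorem stmt18 {n : ℕ} (i : Fin n) (α s : ℕ) :
    (∀ f g : DP n,
      (∑ t ∈ Finset.range (vbound g), totalDer^[t] (f * pmom i α t g)) =
      (∑ t ∈ Finset.range (vbound g), totalDer^[t] f * pderiv (i, α + t) g)) ∧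
    (∀ g : DP n,
      (∑ t ∈ Finset.range (vbound g),
        (Nat.choose (t + s) s : ℝ) • totalDer^[t] (pmom i α (s + t) g)) =
      pderiv (i, α + s) g) :=
  ⟨fun f g => claim1 i α f g, fun g => claim2 i α s g⟩
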